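/- Let R be a discrete valuation ring with maximal ideal P. For every n ≥ 1, the submodule A_n = (0 :_{E} P^n) of E = E(R/P) is not a 2-absorbing primary submodule of E. -/

import Mathlib

/-- A proper ideal `I` is 2-absorbing primary if `a*b*c ∈ I` implies
`a*b ∈ I` or `a*c ∈ √I` or `b*c ∈ √I`. -/
def IsTwoAbsPrimary {R : Type*} [CommRing R] (I : Ideal R) : Prop :=
  I ≠ ⊤ ∧ ∀ a b c : R, a * b * c ∈ I → a * b ∈ I ∨ a * c ∈ I.radical ∨ b * c ∈ I.radical

/-- A proper submodule `N` of `M` is pseudo-absorbing primary if `(N :_R M)`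
is a 2-absorbing primary ideal of `R`. -/
def IsPseudoAbsPrimary {R M : Type*} [CommRing R] [AddCommGroup M] [Module R M]
    (N : Submodule R M) : Prop :=
  N ≠ ⊤ ∧ IsTwoAbsPrimary (N.colon ⊤)

/-- `M` is a pseudo-absorbing primary multiplication module if every
pseudo-absorbing primary submodule `N` satisfies `N = I • M` for some ideal `I`. -/
def IsPAPMultiplication (R M : Type*) [CommRing R] [AddCommGroup M] [Module R M] : Prop :=
  ∀ N : Submodule R M, IsPseudoAbsPrimary N → ∃ I : Ideal R, N = I • (⊤ : Submodule R M)

/-- A submodule K is 2-absorbing primary if abm ∈ K implies am ∈ K or bm ∈ K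
or ab ∈ √(K : M). -/
def Is2AbsPrimarySubmodule {R M : Type*} [CommRing R] [AddCommGroup M] [Module R M]
    (K : Submodule R M) : Prop :=
  ∀ (a b : R) (m : M), a • b • m ∈ K → a • m ∈ K ∨ b • m ∈ K ∨ a * b ∈ (K.colon ⊤).radical

section Aux

universe u v

variable {R : Type u} [CommRing R] [IsDomain R] [IsDiscreteValuationRing R]

open IsLocalRing Ideal

/-- Each quotient `R/P^n` is small in any universe where the residue field is small. -/
lemma aux_small_quot {p : R} (hp : Irreducible p)
    (hsm : Small.{v} (R ⧸ maximalIdeal R)) (n : ℕ) :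
    Small.{v} (R ⧸ (maximalIdeal R ^ n : Ideal R)) := by
  induction n with
  | zero =>
      have : Subsingleton (R ⧸ (maximalIdeal R ^ 0 : Ideal R)) := by
        rw [pow_zero, Ideal.one_eq_top]
        exact Ideal.Quotient.subsingleton_iff.mpr rfl
      infer_instance
  | succ n ih =>
      set P := maximalIdeal R with hPeq
      have hPs : P = Ideal.span {p} := hp.maximalIdeal_eq
      have hle : P ^ (n + 1) ≤ P ^ n := Ideal.pow_le_pow_right (Nat.le_succ n)
      let π : R ⧸ (P ^ (n + 1) : Ideal R) → R ⧸ (P ^ n : Ideal R) :=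
        Ideal.Quotient.factor hle
      have hfib : ∀ b : R ⧸ (P ^ n : Ideal R),
          Small.{v} {a : R ⧸ (P ^ (n + 1) : Ideal R) // π a = b} := by
        intro b
        obtain ⟨r0, hr0⟩ := Ideal.Quotient.mk_surjective b
        have key : ∀ a : {a : R ⧸ (P ^ (n + 1) : Ideal R) // π a = b},
            ∃ c : R, a.1 = Ideal.Quotient.mk _ (r0 + p ^ n * c) := by
          rintro ⟨a, ha⟩
          obtain ⟨r, rfl⟩ := Ideal.Quotient.mk_surjective a
          have : Ideal.Quotient.mk (P ^ n) r = Ideal.Quotient.mk (P ^ n) r0 := by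
            rw [← hr0] at ha
            simpa [π, Ideal.Quotient.factor_mk] using ha
          have hmem : r - r0 ∈ (P ^ n : Ideal R) := by
            rwa [Ideal.Quotient.mk_eq_mk_iff_sub_mem] at this
          rw [hPs, Ideal.span_singleton_pow,
            Ideal.mem_span_singleton] at hmem
          obtain ⟨c, hc⟩ := hmem
          exact ⟨c, by simp only [← hc]; ring_nf⟩
        have hinj : Function.Injective
            (fun a : {a : R ⧸ (P ^ (n + 1) : Ideal R) // π a = b} =>
              Ideal.Quotient.mk P (Classical.choose (key a))) := by
          intro x y hxy
          have hx := Classical.choose_spec (key x)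
          have hy := Classical.choose_spec (key y)
          set cx := Classical.choose (key x)
          set cy := Classical.choose (key y)
          have hsub : cx - cy ∈ P := by
            rwa [Ideal.Quotient.mk_eq_mk_iff_sub_mem] at hxy
          have : p ^ n * cx - p ^ n * cy ∈ (P ^ (n + 1) : Ideal R) := by
            rw [hPs, Ideal.span_singleton_pow, Ideal.mem_span_singleton]
            rw [hPs, Ideal.mem_span_singleton] at hsub
            obtain ⟨d, hd⟩ := hsub
            exact ⟨d, by rw [← mul_sub, hd]; ring⟩
          apply Subtype.ext
          rw [hx, hy, Ideal.Quotient.mk_eq_mk_iff_sub_mem]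
          simpa [add_sub_add_left_eq_sub] using this
        exact small_of_injective hinj
      have : Small.{v} ((b : R ⧸ (P ^ n : Ideal R)) ×
          {a : R ⧸ (P ^ (n + 1) : Ideal R) // π a = b}) := by
        have := ih
        exact small_sigma _
      refine @small_of_injective _ _ this
        (fun a => ⟨π a, a, rfl⟩) ?_
      intro a a' h
      exact congrArg (fun s : (b : R ⧸ (P ^ n : Ideal R)) ×
        {a : R ⧸ (P ^ (n + 1) : Ideal R) // π a = b} => s.2.1) h

/-- A DVR is small in any universe in which its residue field is small. -/
lemma aux_small_R (hsm : Small.{v} (R ⧸ maximalIdeal R)) : Small.{v} R := by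
  obtain ⟨p, hp⟩ := IsDiscreteValuationRing.exists_irreducible R
  set P := maximalIdeal R with hPeq
  have hPs : P = Ideal.span {p} := hp.maximalIdeal_eq
  have h1 : ∀ n : ℕ, Small.{v} (R ⧸ (P ^ n : Ideal R)) := aux_small_quot hp hsm
  have h2 : Small.{v} (∀ n : ℕ, R ⧸ (P ^ (n + 1) : Ideal R)) := by
    have := fun n : ℕ => h1 (n + 1)
    exact small_Pi _
  refine @small_of_injective _ _ h2
    (fun r n => Ideal.Quotient.mk _ r) ?_
  intro r r' h
  by_contra hne
  have hsub : r - r' ≠ 0 := sub_ne_zero.mpr hne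
  obtain ⟨k, u, hk⟩ := IsDiscreteValuationRing.eq_unit_mul_pow_irreducible hsub hp
  have hmem : r - r' ∈ (P ^ (k + 1) : Ideal R) := by
    rw [← Ideal.Quotient.mk_eq_mk_iff_sub_mem]
    exact congrFun h k
  rw [hPs, Ideal.span_singleton_pow, Ideal.mem_span_singleton, hk,
    (Units.isUnit u).dvd_mul_left, pow_dvd_pow_iff hp.ne_zero hp.not_isUnit] at hmem
  omega

variable {E : Type v} [AddCommGroup E] [Module R E]

/-- Divisibility of an injective module over a domain, assuming the ring is small. -/
lemma aux_divisible (hsm : Small.{v} (R ⧸ maximalIdeal R))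
    (hinj : Module.Injective R E) {r : R} (hr : r ≠ 0)
    (x : E) : ∃ m : E, r • m = x := by
  haveI : Small.{v} R := aux_small_R hsm
  have hB : Module.Baer R E := Module.Baer.of_injective hinj
  let e : R ≃ₗ[R] (R ∙ r) := LinearEquiv.toSpanNonzeroSingleton R R r hr
  let g : ↥(Ideal.span {r}) →ₗ[R] E :=
    (LinearMap.toSpanSingleton R E x) ∘ₗ (e.symm : (R ∙ r) →ₗ[R] R)
  obtain ⟨g', hg'⟩ := hB (Ideal.span {r}) g
  refine ⟨g' 1, ?_⟩
  have hrI : r ∈ Ideal.span {r} := Ideal.mem_span_singleton_self r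
  have h1 : r • g' 1 = g' r := by
    rw [← map_smul, smul_eq_mul, mul_one]
  rw [h1, hg' r hrI]
  show (LinearMap.toSpanSingleton R E x) (e.symm ⟨r, hrI⟩) = x
  have : e.symm ⟨r, hrI⟩ = 1 := by
    apply e.injective
    rw [e.apply_symm_apply]
    exact (LinearEquiv.toSpanNonzeroSingleton_one R R r hr).symm
  rw [this, LinearMap.toSpanSingleton_apply, one_smul]

end Aux

/-- For a DVR R with maximal ideal P and E = E(R/P) the injective hull of R/P,
no submodule Aₙ = (0 :_E Pⁿ), n ≥ 1, is 2-absorbing primary in E. -/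
theorem stmt_8 {R E : Type*} [CommRing R] [IsDomain R] [IsDiscreteValuationRing R]
    [AddCommGroup E] [Module R E]
    (hinj : Module.Injective R E)
    (ι : (R ⧸ IsLocalRing.maximalIdeal R) →ₗ[R] E) (hι : Function.Injective ι)
    (hess : ∀ N : Submodule R E, N ≠ ⊥ → N ⊓ LinearMap.range ι ≠ ⊥) :
    ∀ n : ℕ, 1 ≤ n →
      ¬ Is2AbsPrimarySubmodule
        (Submodule.torsionBySet R E ((IsLocalRing.maximalIdeal R ^ n : Ideal R) : Set R)) := by
  intro n hn habs
  obtain ⟨p, hp⟩ := IsDiscreteValuationRing.exists_irreducible R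
  have hpP : p ∈ IsLocalRing.maximalIdeal R := by
    rw [IsLocalRing.mem_maximalIdeal]
    exact hp.not_isUnit
  have hsm : Small.{_} (R ⧸ IsLocalRing.maximalIdeal R) := small_of_injective hι
  have hnt : Nontrivial (R ⧸ IsLocalRing.maximalIdeal R) :=
    Ideal.Quotient.nontrivial_iff.mpr (Ideal.IsMaximal.ne_top (IsLocalRing.maximalIdeal.isMaximal R))
  have hx0 : ι 1 ≠ 0 := fun h => one_ne_zero (hι (by simpa using h))
  have hpx : p • ι 1 = 0 := by
    rw [← map_smul]
    have h2 : p • (1 : R ⧸ IsLocalRing.maximalIdeal R) = 0 := by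
      have h1 : (1 : R ⧸ IsLocalRing.maximalIdeal R) = Submodule.Quotient.mk (1 : R) := rfl
      rw [h1, ← Submodule.Quotient.mk_smul, smul_eq_mul, mul_one,
        Submodule.Quotient.mk_eq_zero]
      exact hpP
    rw [h2, map_zero]
  obtain ⟨m, hm⟩ := aux_divisible hsm hinj (pow_ne_zero (n + 1) hp.ne_zero) (ι 1)
  have hPs : IsLocalRing.maximalIdeal R = Ideal.span {p} := hp.maximalIdeal_eq
  have hPn : (IsLocalRing.maximalIdeal R ^ n : Ideal R) = Ideal.span {p ^ n} := by
    rw [hPs, Ideal.span_singleton_pow]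
  have hmemA : ∀ y : E, p ^ n • y = 0 →
      y ∈ Submodule.torsionBySet R E ((IsLocalRing.maximalIdeal R ^ n : Ideal R) : Set R) := by
    intro y hy
    rw [Submodule.mem_torsionBySet_iff]
    rintro ⟨a, ha⟩
    simp only [SetLike.mem_coe, hPn, Ideal.mem_span_singleton] at ha
    obtain ⟨c, rfl⟩ := ha
    rw [mul_smul, smul_comm, hy, smul_zero]
  have hnotA : ∀ y : E,
      y ∈ Submodule.torsionBySet R E ((IsLocalRing.maximalIdeal R ^ n : Ideal R) : Set R) →
      p ^ n • y = 0 := by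
    intro y hy
    rw [Submodule.mem_torsionBySet_iff] at hy
    exact hy ⟨p ^ n, by
      simp only [SetLike.mem_coe, hPn]; exact Ideal.mem_span_singleton_self _⟩
  have h1 : p • p • m ∈
      Submodule.torsionBySet R E ((IsLocalRing.maximalIdeal R ^ n : Ideal R) : Set R) := by
    apply hmemA
    have he : p ^ n * p * p = p * p ^ (n + 1) := by ring
    rw [smul_smul, smul_smul, he, mul_smul, hm, hpx]
  rcases habs p p m h1 with h | h | h
  · apply hx0
    have h0 := hnotA _ h
    rw [smul_smul, ← pow_succ] at h0
    rw [← hm, h0]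
  · apply hx0
    have h0 := hnotA _ h
    rw [smul_smul, ← pow_succ] at h0
    rw [← hm, h0]
  · obtain ⟨k, hk⟩ := Ideal.mem_radical_iff.mp h
    obtain ⟨m', hm'⟩ := aux_divisible hsm hinj (pow_ne_zero (n + 2 * k) hp.ne_zero) (ι 1)
    rw [Submodule.mem_colon] at hk
    have h0 := hnotA _ (hk m' trivial)
    apply hx0
    rw [← hm']
    have he : p ^ (n + 2 * k) = p ^ n * (p * p) ^ k := by ring
    rw [he, mul_smul, h0]
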